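/- Let h : (0,1] → [0,∞) be a nonincreasing integrable function with ∫₀¹ h(s) log⁺ h(s) ds < ∞ (i.e. h belongs to the Zygmund class L log L on [0,1]). Then ∫₀¹ h(s) log(1/s) ds < ∞; consequently, for Δ(t) = ∫₀^t h(s) ds one has ∫₀¹ Δ(t)/t dt < ∞ and lim_{δ→0⁺} ∫₀^δ Δ(t)/t dt = 0. (The key estimate in the proof of Proposition 1 of the paper.) -/

import Mathlib

open MeasureTheory Set Filter Real
open scoped Topology ENNReal

private lemma keyL1 (f : ℝ → ℝ) (fmeas : Measurable f) (fnonneg : ∀ s, 0 ≤ f s)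
    (hLlogL : IntegrableOn (fun s => f s * max (Real.log (f s)) 0) (Set.Ioc 0 1)) :
    IntegrableOn (fun s => f s * Real.log (1 / s)) (Set.Ioc 0 1) := by
  have hrpow : IntegrableOn (fun s : ℝ => s ^ (-(3:ℝ)/4)) (Set.Ioc 0 1) := by
    have := intervalIntegral.intervalIntegrable_rpow' (r := -(3:ℝ)/4) (by norm_num) (a := (0:ℝ)) (b := 1)
    rwa [intervalIntegrable_iff_integrableOn_Ioc_of_le (by norm_num)] at this
  refine Integrable.mono'
    (g := fun s => 4 * s ^ (-(3:ℝ)/4) + 2 * (f s * max (Real.log (f s)) 0))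
    ((hrpow.const_mul 4).add (hLlogL.const_mul 2)) ?_ ?_
  · exact (fmeas.mul (Real.measurable_log.comp (measurable_const.div measurable_id))).aestronglyMeasurable
  · rw [ae_restrict_iff' measurableSet_Ioc]
    refine ae_of_all _ fun s hs => ?_
    have hs0 : 0 < s := hs.1
    have hlog : 0 ≤ Real.log (1/s) := Real.log_nonneg (by rw [le_div_iff₀ hs0]; simpa using hs.2)
    rw [Real.norm_eq_abs, abs_of_nonneg (mul_nonneg (fnonneg s) hlog)]
    by_cases hcase : f s ≤ s ^ (-(1:ℝ)/2)
    · have h2 : Real.log (s ^ (-(1:ℝ)/4)) ≤ s ^ (-(1:ℝ)/4) :=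
        (Real.log_le_sub_one_of_pos (Real.rpow_pos_of_pos hs0 _)).trans (by linarith)
      rw [Real.log_rpow hs0] at h2
      have h1 : Real.log (1/s) ≤ 4 * s ^ (-(1:ℝ)/4) := by
        rw [one_div, Real.log_inv]; linarith
      calc f s * Real.log (1/s) ≤ s ^ (-(1:ℝ)/2) * (4 * s ^ (-(1:ℝ)/4)) :=
            mul_le_mul hcase h1 hlog (Real.rpow_nonneg hs0.le _)
        _ = 4 * s ^ (-(3:ℝ)/4) := by
            rw [mul_comm, mul_assoc, ← Real.rpow_add hs0]; norm_num
        _ ≤ _ := le_add_of_nonneg_right (mul_nonneg (by norm_num) (mul_nonneg (fnonneg s) (le_max_right _ _)))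
    · push_neg at hcase
      have h4 : Real.log (s ^ (-(1:ℝ)/2)) ≤ Real.log (f s) :=
        Real.log_le_log (Real.rpow_pos_of_pos hs0 _) hcase.le
      rw [Real.log_rpow hs0] at h4
      have h3 : Real.log (1/s) ≤ 2 * max (Real.log (f s)) 0 := by
        rw [one_div, Real.log_inv]
        have := le_max_left (Real.log (f s)) (0:ℝ)
        linarith
      calc f s * Real.log (1/s) ≤ f s * (2 * max (Real.log (f s)) 0) :=
            mul_le_mul_of_nonneg_left h3 (fnonneg s)
        _ = 2 * (f s * max (Real.log (f s)) 0) := by ring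
        _ ≤ _ := le_add_of_nonneg_left (by positivity)

private lemma keyL2 (f : ℝ → ℝ) (fmeas : Measurable f) (fnonneg : ∀ s, 0 ≤ f s)
    (hfint : Integrable f)
    (hflog : IntegrableOn (fun s => f s * Real.log (1 / s)) (Set.Ioc 0 1)) :
    IntegrableOn (fun t => (∫ s in Set.Ioc (0:ℝ) t, f s) / t) (Set.Ioc 0 1) := by
  constructor
  · -- a.e. strong measurability
    have hcont : Continuous fun t => ∫ x in (0:ℝ)..t, f x := hfint.continuous_primitive 0
    have hmeas : Measurable fun t => (∫ x in (0:ℝ)..t, f x) / t :=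
      hcont.measurable.div measurable_id
    refine (hmeas.aestronglyMeasurable).congr ?_
    rw [EventuallyEq, ae_restrict_iff' measurableSet_Ioc]
    refine ae_of_all _ fun t ht => ?_
    rw [intervalIntegral.integral_of_le ht.1.le]
  · have hnn : 0 ≤ᵐ[volume.restrict (Set.Ioc (0:ℝ) 1)]
        fun t => (∫ s in Set.Ioc (0:ℝ) t, f s) / t :=
      (ae_restrict_mem measurableSet_Ioc).mono fun t ht =>
        div_nonneg (integral_nonneg fun s => fnonneg s) ht.1.le
    rw [hasFiniteIntegral_iff_ofReal hnn]
    set φ : ℝ → ℝ≥0∞ := fun s => ENNReal.ofReal (f s) with hφdef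
    have hφ : Measurable φ := fmeas.ennreal_ofReal
    set F : ℝ → ℝ → ℝ≥0∞ :=
      fun t s => (Set.Ioc (0:ℝ) t).indicator (fun s' => φ s' * (ENNReal.ofReal t)⁻¹) s with hFdef
    have key : (∫⁻ t in Set.Ioc (0:ℝ) 1, ENNReal.ofReal ((∫ s in Set.Ioc (0:ℝ) t, f s) / t))
        = ENNReal.ofReal (∫ s in Set.Ioc (0:ℝ) 1, f s * Real.log (1 / s)) := by
      calc ∫⁻ t in Set.Ioc (0:ℝ) 1, ENNReal.ofReal ((∫ s in Set.Ioc (0:ℝ) t, f s) / t)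
          = ∫⁻ t in Set.Ioc (0:ℝ) 1, ∫⁻ s in Set.Ioc (0:ℝ) 1, F t s := by
            refine setLIntegral_congr_fun measurableSet_Ioc (fun t ht => ?_)
            have ht0 : (0:ℝ) < t := ht.1
            rw [div_eq_mul_inv, ENNReal.ofReal_mul (integral_nonneg fun s => fnonneg s),
              ENNReal.ofReal_inv_of_pos ht0,
              ofReal_integral_eq_lintegral_ofReal hfint.integrableOn (ae_of_all _ fnonneg),
              ← lintegral_mul_const _ hφ]
            rw [hFdef]
            rw [lintegral_indicator measurableSet_Ioc,
              Measure.restrict_restrict measurableSet_Ioc,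
              Set.inter_eq_left.mpr (Set.Ioc_subset_Ioc le_rfl ht.2)]
        _ = ∫⁻ s in Set.Ioc (0:ℝ) 1, ∫⁻ t in Set.Ioc (0:ℝ) 1, F t s := by
            refine lintegral_lintegral_swap ?_
            have : Function.uncurry F =
                ({p : ℝ × ℝ | 0 < p.2 ∧ p.2 ≤ p.1}).indicator
                  (fun p => φ p.2 * (ENNReal.ofReal p.1)⁻¹) := by
              funext p
              simp only [Function.uncurry, hFdef, Set.indicator_apply, Set.mem_Ioc,
                Set.mem_setOf_eq]
            rw [this]
            refine (Measurable.indicator ?_ ?_).aemeasurable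
            · exact (hφ.comp measurable_snd).mul (measurable_fst.ennreal_ofReal.inv)
            · exact (measurableSet_lt measurable_const measurable_snd).inter
                (measurableSet_le measurable_snd measurable_fst)
        _ = ∫⁻ s in Set.Ioc (0:ℝ) 1, ENNReal.ofReal (f s * Real.log (1 / s)) := by
            refine setLIntegral_congr_fun measurableSet_Ioc (fun s hs => ?_)
            have hs0 : (0:ℝ) < s := hs.1
            have hFe : ∀ t, F t s = (Set.Ici s).indicator
                (fun t' => φ s * (ENNReal.ofReal t')⁻¹) t := by
              intro t
              simp only [hFdef, Set.indicator_apply, Set.mem_Ioc, Set.mem_Ici]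
              by_cases hst : s ≤ t
              · simp [hst, hs0]
              · simp [hst]
            simp only [hFe]
            rw [lintegral_indicator measurableSet_Ici,
              Measure.restrict_restrict measurableSet_Ici]
            have hset : Set.Ici s ∩ Set.Ioc (0:ℝ) 1 = Set.Icc s 1 := by
              ext t
              simp only [Set.mem_inter_iff, Set.mem_Ici, Set.mem_Ioc, Set.mem_Icc]
              exact ⟨fun ⟨a, _, c⟩ => ⟨a, c⟩, fun ⟨a, b⟩ => ⟨a, lt_of_lt_of_le hs0 a, b⟩⟩
            rw [hset, lintegral_const_mul' _ _ ENNReal.ofReal_ne_top]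
            have hinv : (∫⁻ t in Set.Icc s 1, (ENNReal.ofReal t)⁻¹)
                = ENNReal.ofReal (Real.log (1 / s)) := by
              have h1 : (∫⁻ t in Set.Icc s 1, (ENNReal.ofReal t)⁻¹)
                  = ∫⁻ t in Set.Icc s 1, ENNReal.ofReal (1 / t) := by
                refine setLIntegral_congr_fun measurableSet_Icc (fun t ht => ?_)
                rw [one_div, ENNReal.ofReal_inv_of_pos (lt_of_lt_of_le hs0 ht.1)]
              have hIoo : IntegrableOn (fun t : ℝ => 1 / t) (Set.Icc s 1) := by
                refine ContinuousOn.integrableOn_compact isCompact_Icc ?_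
                exact continuousOn_const.div continuousOn_id
                  fun t ht => ne_of_gt (lt_of_lt_of_le hs0 ht.1)
              have h2 : ∫ t in Set.Icc s 1, (1:ℝ) / t = Real.log (1 / s) := by
                rw [MeasureTheory.integral_Icc_eq_integral_Ioc,
                  ← intervalIntegral.integral_of_le hs.2,
                  integral_one_div]
                intro hc
                rw [Set.mem_uIcc] at hc
                rcases hc with ⟨h1', h2'⟩ | ⟨h1', h2'⟩ <;> linarith
              have hnn2 : 0 ≤ᵐ[volume.restrict (Set.Icc s 1)] fun t : ℝ => 1 / t :=
                (ae_restrict_mem measurableSet_Icc).mono fun t ht =>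
                  div_nonneg zero_le_one (lt_of_lt_of_le hs0 ht.1).le
              rw [h1, ← ofReal_integral_eq_lintegral_ofReal hIoo hnn2, h2]
            rw [hinv, ← ENNReal.ofReal_mul (fnonneg s)]
        _ = ENNReal.ofReal (∫ s in Set.Ioc (0:ℝ) 1, f s * Real.log (1 / s)) := by
            refine (ofReal_integral_eq_lintegral_ofReal hflog ?_).symm
            refine (ae_restrict_mem measurableSet_Ioc).mono fun s hs =>
              mul_nonneg (fnonneg s) ?_
            exact Real.log_nonneg (by rw [le_div_iff₀ hs.1]; simpa using hs.2)
    rw [key]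
    exact ENNReal.ofReal_lt_top

/-- The key estimate in the proof of Proposition 1 of the paper: a nonincreasing
nonnegative function `h` of the Zygmund class `L log L` on `(0,1]` satisfies
`∫₀¹ h(s) log(1/s) ds < ∞`; consequently, for `Δ(t) = ∫₀^t h(s) ds` one has
`∫₀¹ Δ(t)/t dt < ∞` and `∫₀^δ Δ(t)/t dt → 0` as `δ → 0⁺`. -/
theorem stmt17 (h : ℝ → ℝ) (hmono : AntitoneOn h (Set.Ioc 0 1))
    (h0 : ∀ s ∈ Set.Ioc (0 : ℝ) 1, 0 ≤ h s)
    (hint : IntegrableOn h (Set.Ioc 0 1))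
    (hLlogL : IntegrableOn (fun s => h s * max (Real.log (h s)) 0) (Set.Ioc 0 1)) :
    IntegrableOn (fun s => h s * Real.log (1 / s)) (Set.Ioc 0 1) ∧
    IntegrableOn (fun t => (∫ s in Set.Ioc (0 : ℝ) t, h s) / t) (Set.Ioc 0 1) ∧
    Filter.Tendsto (fun δ : ℝ => ∫ t in Set.Ioc (0 : ℝ) δ, (∫ s in Set.Ioc (0 : ℝ) t, h s) / t)
      (nhdsWithin 0 (Set.Ioi 0)) (nhds 0) := by
  classical
  obtain ⟨g, gsm, hg⟩ : ∃ g, StronglyMeasurable g ∧ h =ᵐ[volume.restrict (Set.Ioc 0 1)] g :=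
    ⟨hint.aestronglyMeasurable.mk h, hint.aestronglyMeasurable.stronglyMeasurable_mk,
      hint.aestronglyMeasurable.ae_eq_mk⟩
  set f : ℝ → ℝ := (Set.Ioc (0:ℝ) 1).indicator (fun s => max (g s) 0) with hfdef
  have fmeas : Measurable f :=
    (gsm.measurable.max measurable_const).indicator measurableSet_Ioc
  have fnonneg : ∀ s, 0 ≤ f s := fun s => by
    by_cases hs : s ∈ Set.Ioc (0:ℝ) 1 <;>
      simp [hfdef, Set.indicator_apply, hs, le_max_right]
  have hfh : h =ᵐ[volume.restrict (Set.Ioc (0:ℝ) 1)] f := by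
    filter_upwards [hg, ae_restrict_mem measurableSet_Ioc] with s hs hmem
    rw [hfdef, Set.indicator_of_mem hmem, ← hs, max_eq_left (h0 s hmem)]
  have hfintOn : IntegrableOn f (Set.Ioc (0:ℝ) 1) := hint.congr hfh
  have hfint : Integrable f := by
    have := hfintOn.integrable_indicator measurableSet_Ioc
    rwa [hfdef, Set.indicator_indicator, Set.inter_self] at this
  have hfLlogL : IntegrableOn (fun s => f s * max (Real.log (f s)) 0) (Set.Ioc 0 1) := by
    refine hLlogL.congr ?_
    filter_upwards [hfh] with s hs
    rw [hs]
  have part1f : IntegrableOn (fun s => f s * Real.log (1 / s)) (Set.Ioc 0 1) :=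
    keyL1 f fmeas fnonneg hfLlogL
  have part1 : IntegrableOn (fun s => h s * Real.log (1 / s)) (Set.Ioc 0 1) := by
    refine part1f.congr ?_
    filter_upwards [hfh] with s hs
    rw [hs]
  have hΔeq : ∀ t ∈ Set.Ioc (0:ℝ) 1,
      (∫ s in Set.Ioc (0:ℝ) t, h s) = ∫ s in Set.Ioc (0:ℝ) t, f s := fun t ht =>
    integral_congr_ae (ae_mono (Measure.restrict_mono (Set.Ioc_subset_Ioc le_rfl ht.2) le_rfl) hfh)
  have part2f : IntegrableOn (fun t => (∫ s in Set.Ioc (0:ℝ) t, f s) / t) (Set.Ioc 0 1) :=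
    keyL2 f fmeas fnonneg hfint part1f
  have part2 : IntegrableOn (fun t => (∫ s in Set.Ioc (0:ℝ) t, h s) / t) (Set.Ioc 0 1) := by
    refine part2f.congr ?_
    filter_upwards [ae_restrict_mem measurableSet_Ioc] with t ht
    rw [hΔeq t ht]
  refine ⟨part1, part2, ?_⟩
  -- part 3
  set GI : ℝ → ℝ :=
    (Set.Ioc (0:ℝ) 1).indicator (fun t => (∫ s in Set.Ioc (0:ℝ) t, f s) / t) with hGIdef
  have GIint : Integrable GI := part2f.integrable_indicator measurableSet_Ioc
  have hP : Continuous fun δ => ∫ t in (0:ℝ)..δ, GI t := GIint.continuous_primitive 0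
  have hP0 : Tendsto (fun δ => ∫ t in (0:ℝ)..δ, GI t) (𝓝 0) (𝓝 0) := by
    have := hP.tendsto 0
    rwa [intervalIntegral.integral_same] at this
  refine Tendsto.congr' ?_ (hP0.mono_left nhdsWithin_le_nhds)
  filter_upwards [Ioc_mem_nhdsGT zero_lt_one] with δ hδ
  rw [intervalIntegral.integral_of_le hδ.1.le]
  refine (setIntegral_congr_fun measurableSet_Ioc fun t ht => ?_).symm
  have ht' : t ∈ Set.Ioc (0:ℝ) 1 := ⟨ht.1, ht.2.trans hδ.2⟩
  rw [hΔeq t ht', hGIdef, Set.indicator_of_mem ht']
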